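/- Let n ≥ 1, let X[1..n] be a sorted nondecreasing list of nonnegative real numbers with X[n] > 0, and let δ ∈ (0,1). Suppose there are t ≥ 1 intervals R_i = [r_i, r'_i] (1 ≤ i ≤ t) with r'_1 = n, r_i ≤ r'_i, and r'_{i+1} = r_i − 1 for 1 ≤ i < t, and thresholds b_i = X[r'_i]/(1+δ), such that each R_i is a (1+δ)-approximate b_i-region of the sublist X[1..r'_i], and X[j] < δ·X[n]/(3n) for every index j < r_t. Then s = Σ_{i=1}^t (r'_i − r_i + 1)·b_i satisfies ((1 − δ/3)/(1+δ))·Σ_{j=1}^n X[j] ≤ s ≤ (1+δ)·Σ_{j=1}^n X[j]. -/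

import Mathlib

/-- `R = [s, n']` is a `(1+δ)`-approximate `b`-region of the sorted list `X[1..n']`:
it ends at the last position `n'`, at least `|R|/(1+δ)` of the indices `j ∈ R`
satisfy `X j ≥ b`, and `R` contains every index `j ∈ [1, n']` with `X j ≥ b`. -/
def IsApproxRegion (X : ℕ → ℝ) (n' : ℕ) (b δ : ℝ) (s : ℕ) : Prop :=
  1 ≤ s ∧ s ≤ n' ∧
  ((n' : ℝ) - s + 1) / (1 + δ) ≤ ((Finset.Icc s n').filter (fun j => b ≤ X j)).card ∧
  ∀ j, 1 ≤ j → j ≤ n' → b ≤ X j → s ≤ j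

theorem approximate_sum_bounds
    (n : ℕ) (hn : 1 ≤ n) (X : ℕ → ℝ)
    (hsorted : ∀ i j, 1 ≤ i → i ≤ j → j ≤ n → X i ≤ X j)
    (hnonneg : ∀ j, 1 ≤ j → j ≤ n → 0 ≤ X j)
    (hXn : 0 < X n)
    (δ : ℝ) (hδ0 : 0 < δ) (hδ1 : δ < 1)
    (t : ℕ) (ht : 1 ≤ t)
    (r r' : ℕ → ℕ)
    (hr'1 : r' 1 = n)
    (hrr' : ∀ i, 1 ≤ i → i ≤ t → r i ≤ r' i)
    (hchain : ∀ i, 1 ≤ i → i < t → r' (i + 1) = r i - 1)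
    (hregion : ∀ i, 1 ≤ i → i ≤ t →
      IsApproxRegion X (r' i) (X (r' i) / (1 + δ)) δ (r i))
    (htail : ∀ j, 1 ≤ j → j < r t → X j < δ * X n / (3 * n)) :
    ((1 - δ / 3) / (1 + δ)) * (∑ j ∈ Finset.Icc 1 n, X j)
        ≤ ∑ i ∈ Finset.Icc 1 t, ((r' i : ℝ) - (r i : ℝ) + 1) * (X (r' i) / (1 + δ))
    ∧ ∑ i ∈ Finset.Icc 1 t, ((r' i : ℝ) - (r i : ℝ) + 1) * (X (r' i) / (1 + δ))
        ≤ (1 + δ) * (∑ j ∈ Finset.Icc 1 n, X j) := by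
  have h1δ : (0:ℝ) < 1 + δ := by linarith
  have hr1 : ∀ i, 1 ≤ i → i ≤ t → 1 ≤ r i := fun i h1 h2 => (hregion i h1 h2).1
  have hr'n : ∀ i, 1 ≤ i → i ≤ t → r' i ≤ n := by
    intro i hi
    induction i, hi using Nat.le_induction with
    | base => intro _; exact hr'1.le
    | succ k hk ih =>
      intro hkt
      have hklt : k < t := hkt
      rw [hchain k hk hklt]
      have h1 := hrr' k hk hklt.le
      have h2 := ih hklt.le
      omega
  have hr'1le : ∀ i, 1 ≤ i → i ≤ t → 1 ≤ r' i := fun i h1 h2 =>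
    le_trans (hr1 i h1 h2) (hrr' i h1 h2)
  have hXr'nonneg : ∀ i, 1 ≤ i → i ≤ t → 0 ≤ X (r' i) := fun i h1 h2 =>
    hnonneg _ (hr'1le i h1 h2) (hr'n i h1 h2)
  have hcard : ∀ i, 1 ≤ i → i ≤ t →
      ((Finset.Icc (r i) (r' i)).card : ℝ) = (r' i : ℝ) - r i + 1 := by
    intro i h1 h2
    rw [Nat.card_Icc, Nat.cast_sub (by have := hrr' i h1 h2; omega)]
    push_cast; ring
  -- per-interval lower bound on the interval sum (for the upper bound on s)
  have hL1 : ∀ i, 1 ≤ i → i ≤ t →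
      ((r' i : ℝ) - r i + 1) * (X (r' i) / (1 + δ))
        ≤ (1 + δ) * ∑ j ∈ Finset.Icc (r i) (r' i), X j := by
    intro i h1 h2
    obtain ⟨hs1, hs2, hc, -⟩ := hregion i h1 h2
    set b := X (r' i) / (1 + δ) with hb
    have hbnn : 0 ≤ b := div_nonneg (hXr'nonneg i h1 h2) h1δ.le
    set c := ((Finset.Icc (r i) (r' i)).filter (fun j => b ≤ X j)).card with hcdef
    have h3 : ((r' i : ℝ) - r i + 1) ≤ (1 + δ) * c := by
      rw [div_le_iff₀ h1δ] at hc
      linarith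
    have h4 : (c : ℝ) * b
        ≤ ∑ j ∈ (Finset.Icc (r i) (r' i)).filter (fun j => b ≤ X j), X j := by
      have := Finset.card_nsmul_le_sum
        ((Finset.Icc (r i) (r' i)).filter (fun j => b ≤ X j)) X b
        (fun j hj => (Finset.mem_filter.mp hj).2)
      rwa [nsmul_eq_mul] at this
    have h5 : ∑ j ∈ (Finset.Icc (r i) (r' i)).filter (fun j => b ≤ X j), X j
        ≤ ∑ j ∈ Finset.Icc (r i) (r' i), X j := by
      apply Finset.sum_le_sum_of_subset_of_nonneg (Finset.filter_subset _ _)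
      intro j hj _
      rw [Finset.mem_Icc] at hj
      exact hnonneg j (le_trans (hr1 i h1 h2) hj.1) (le_trans hj.2 (hr'n i h1 h2))
    calc ((r' i : ℝ) - r i + 1) * b ≤ ((1 + δ) * c) * b :=
          mul_le_mul_of_nonneg_right h3 hbnn
      _ = (1 + δ) * ((c : ℝ) * b) := by ring
      _ ≤ (1 + δ) * ∑ j ∈ Finset.Icc (r i) (r' i), X j :=
          mul_le_mul_of_nonneg_left (le_trans h4 h5) h1δ.le
  -- per-interval upper bound on the interval sum (for the lower bound on s)
  have hL2 : ∀ i, 1 ≤ i → i ≤ t →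
      ∑ j ∈ Finset.Icc (r i) (r' i), X j ≤ ((r' i : ℝ) - r i + 1) * X (r' i) := by
    intro i h1 h2
    have h := Finset.sum_le_card_nsmul (Finset.Icc (r i) (r' i)) X (X (r' i))
      (fun j hj => by
        rw [Finset.mem_Icc] at hj
        exact hsorted j (r' i) (le_trans (hr1 i h1 h2) hj.1) hj.2 (hr'n i h1 h2))
    rwa [nsmul_eq_mul, hcard i h1 h2] at h
  -- the intervals tile [r k, n]
  have hpart : ∀ k, 1 ≤ k → k ≤ t →
      ∑ i ∈ Finset.Icc 1 k, ∑ j ∈ Finset.Icc (r i) (r' i), X j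
        = ∑ j ∈ Finset.Ioc (r k - 1) n, X j := by
    intro k hk
    induction k, hk using Nat.le_induction with
    | base =>
      intro h1t
      rw [Finset.Icc_self, Finset.sum_singleton]
      have hset : Finset.Icc (r 1) (r' 1) = Finset.Ioc (r 1 - 1) n := by
        rw [← Finset.Icc_add_one_left_eq_Ioc]
        exact congrArg₂ Finset.Icc (by have := hr1 1 le_rfl h1t; omega) hr'1
      rw [hset]
    | succ k hk ih =>
      intro hkt
      have hklt : k < t := hkt
      rw [Finset.sum_Icc_succ_top (by omega : 1 ≤ k + 1), ih hklt.le]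
      have heq : Finset.Icc (r (k+1)) (r' (k+1)) = Finset.Ioc (r (k+1) - 1) (r k - 1) := by
        rw [← Finset.Icc_add_one_left_eq_Ioc, hchain k hk hklt]
        congr 1
        have := hr1 (k+1) (by omega) hkt; omega
      rw [heq]
      have hstep : (∑ j ∈ Finset.Ioc (r (k+1) - 1) (r k - 1), X j)
          + ∑ j ∈ Finset.Ioc (r k - 1) n, X j
          = ∑ j ∈ Finset.Ioc (r (k+1) - 1) n, X j := by
        apply Finset.sum_Ioc_consecutive
        · have h1 := hrr' (k+1) (by omega) hkt
          have h2 := hchain k hk hklt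
          omega
        · have h1 := hrr' k hk hklt.le
          have h2 := hr'n k hk hklt.le
          omega
      linarith
  set T := ∑ j ∈ Finset.Icc 1 n, X j with hT
  set S := ∑ j ∈ Finset.Ioc (r t - 1) n, X j with hS
  have hTnn : 0 ≤ T :=
    Finset.sum_nonneg (fun j hj => by
      rw [Finset.mem_Icc] at hj; exact hnonneg j hj.1 hj.2)
  have hrtn : r t - 1 ≤ n := by
    have h1 := hrr' t ht le_rfl; have h2 := hr'n t ht le_rfl; omega
  have hSle : S ≤ T := by
    apply Finset.sum_le_sum_of_subset_of_nonneg
    · intro j hj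
      rw [Finset.mem_Ioc] at hj; rw [Finset.mem_Icc]
      omega
    · intro j hj _
      rw [Finset.mem_Icc] at hj; exact hnonneg j hj.1 hj.2
  have hIcc1n : Finset.Icc 1 n = Finset.Ioc 0 n := by
    rw [← Finset.Icc_add_one_left_eq_Ioc, zero_add]
  have hsplit : (∑ j ∈ Finset.Ioc 0 (r t - 1), X j) + S = T := by
    rw [hS, hT, hIcc1n]
    exact Finset.sum_Ioc_consecutive X (Nat.zero_le _) hrtn
  have hXnT : X n ≤ T :=
    Finset.single_le_sum (fun j hj => by
        rw [Finset.mem_Icc] at hj; exact hnonneg j hj.1 hj.2)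
      (Finset.mem_Icc.mpr ⟨hn, le_rfl⟩)
  have hnpos : (0:ℝ) < n := by exact_mod_cast hn
  have htailbound : ∑ j ∈ Finset.Ioc 0 (r t - 1), X j ≤ δ * T / 3 := by
    have hb : ∀ j ∈ Finset.Ioc 0 (r t - 1), X j ≤ δ * X n / (3 * n) := by
      intro j hj
      rw [Finset.mem_Ioc] at hj
      have hrt := hr1 t ht le_rfl
      exact le_of_lt (htail j hj.1 (by omega))
    have h1 := Finset.sum_le_card_nsmul _ X _ hb
    rw [nsmul_eq_mul, Nat.card_Ioc] at h1
    have hcle : ((r t - 1 - 0 : ℕ) : ℝ) ≤ (n : ℝ) := by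
      exact_mod_cast Nat.cast_le.mpr (by omega : r t - 1 - 0 ≤ n)
    have hcpos : (0:ℝ) ≤ δ * X n / (3 * n) := by positivity
    calc ∑ j ∈ Finset.Ioc 0 (r t - 1), X j
        ≤ ((r t - 1 - 0 : ℕ) : ℝ) * (δ * X n / (3 * n)) := h1
      _ ≤ (n : ℝ) * (δ * X n / (3 * n)) := mul_le_mul_of_nonneg_right hcle hcpos
      _ = δ * X n / 3 := by field_simp
      _ ≤ δ * T / 3 := by gcongr
  have hS_lower : (1 - δ / 3) * T ≤ S := by nlinarith
  set s := ∑ i ∈ Finset.Icc 1 t, ((r' i : ℝ) - (r i : ℝ) + 1) * (X (r' i) / (1 + δ)) with hs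
  have hsum_eq : ∑ i ∈ Finset.Icc 1 t, ∑ j ∈ Finset.Icc (r i) (r' i), X j = S :=
    hpart t ht le_rfl
  have hupper : s ≤ (1 + δ) * S := by
    rw [hs, ← hsum_eq, Finset.mul_sum]
    apply Finset.sum_le_sum
    intro i hi
    rw [Finset.mem_Icc] at hi
    exact hL1 i hi.1 hi.2
  have hlower : S ≤ (1 + δ) * s := by
    rw [hs, ← hsum_eq, Finset.mul_sum]
    apply Finset.sum_le_sum
    intro i hi
    rw [Finset.mem_Icc] at hi
    have := hL2 i hi.1 hi.2
    have heq : (1 + δ) * (((r' i : ℝ) - r i + 1) * (X (r' i) / (1 + δ)))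
        = ((r' i : ℝ) - r i + 1) * X (r' i) := by
      field_simp
    linarith
  constructor
  · rw [div_mul_eq_mul_div, div_le_iff₀ h1δ]
    nlinarith
  · nlinarith
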